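/- If γ_1 = 1 and γ_3 < ∞, then Q_n = (2Q_0/γ_2) n + O(log n) as n → ∞; that is, there exist a constant C > 0 and an index N such that |Q_n − (2Q_0/γ_2) n| ≤ C log n for all n ≥ N. -/

import Mathlib

open Finset

namespace PostnikovAux

lemma nat_d2 (n : ℕ) : (∑ a ∈ range n, a) * 2 = n.descFactorial 2 := by
  rw [Finset.sum_range_id_mul_two]
  simp [Nat.descFactorial_succ, Nat.descFactorial_one]
  exact Nat.mul_comm _ _

lemma nat_d3 (n : ℕ) : (∑ b ∈ range n, ∑ a ∈ range b, a) * 6 = n.descFactorial 3 := by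
  induction n with
  | zero => rfl
  | succ n ih =>
    rw [Finset.sum_range_succ, Nat.add_mul, ih]
    have h2 : (∑ a ∈ range n, a) * 2 = n * (n - 1) := Finset.sum_range_id_mul_two n
    have h6 : (∑ a ∈ range n, a) * 6 = n * (n-1) * 3 := by omega
    rw [h6]
    rcases n with _ | _ | m
    · rfl
    · rfl
    · simp [Nat.descFactorial_succ, Nat.descFactorial_one, Nat.descFactorial_zero]
      ring

lemma nat_d2_le (j : ℕ) : j.descFactorial 2 ≤ j.descFactorial 3 + 2 * j := by
  rcases j with _ | _ | _ | m
  · simp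
  · simp
  · simp [Nat.descFactorial_succ, Nat.descFactorial_one, Nat.descFactorial_zero]
  · have h1 : (m+3).descFactorial 2 = (m+2) * (m+3) := by
      simp [Nat.descFactorial_succ, Nat.descFactorial_one, Nat.descFactorial_zero]
    have h2 : (m+3).descFactorial 3 = (m+1) * ((m+2) * (m+3)) := by
      simp [Nat.descFactorial_succ, Nat.descFactorial_one, Nat.descFactorial_zero]
    rw [h1, h2]
    nlinarith

lemma SP (g : ℕ → ENNReal) (m : ℕ) :
    ∑ j ∈ range (m+1), g j + ∑' j, (if m < j then g j else 0) = ∑' j, g j := by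
  have h1 : (∑' j, (if j ≤ m then g j else 0)) = ∑ j ∈ range (m+1), g j := by
    rw [tsum_eq_sum (s := range (m+1)) (fun b hb => if_neg (by simp at hb; omega))]
    exact Finset.sum_congr rfl fun b hb => if_pos (by simp at hb; omega)
  calc ∑ j ∈ range (m+1), g j + ∑' j, (if m < j then g j else 0)
      = ∑' j, ((if j ≤ m then g j else 0) + (if m < j then g j else 0)) := by
        rw [ENNReal.tsum_add, h1]
    _ = ∑' j, g j := tsum_congr fun j => by
        rcases le_or_gt j m with h | h
        · rw [if_pos h, if_neg (by omega), add_zero]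
        · rw [if_neg (by omega), if_pos h, zero_add]

lemma LW (w g : ℕ → ENNReal) :
    ∑' a, w a * ∑' j, (if a < j then g j else 0)
      = ∑' j, (∑ a ∈ range j, w a) * g j := by
  calc ∑' a, w a * ∑' j, (if a < j then g j else 0)
      = ∑' a, ∑' j, (if a < j then w a * g j else 0) := by
        refine tsum_congr fun a => ?_
        rw [← ENNReal.tsum_mul_left]
        exact tsum_congr fun j => by split_ifs <;> simp
    _ = ∑' j, ∑' a, (if a < j then w a * g j else 0) := ENNReal.tsum_comm
    _ = ∑' j, (∑ a ∈ range j, w a) * g j := by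
        refine tsum_congr fun j => ?_
        rw [tsum_eq_sum (s := range j) (fun b hb => if_neg (by simpa using hb)),
          Finset.sum_mul]
        exact Finset.sum_congr rfl fun a ha => if_pos (by simpa using ha)

lemma L1 (g : ℕ → ENNReal) :
    ∑' m, (∑' j, (if m < j then g j else 0)) = ∑' j : ℕ, (j : ENNReal) * g j := by
  calc ∑' m, (∑' j, (if m < j then g j else 0))
      = ∑' m, (fun _ : ℕ => (1:ENNReal)) m * ∑' j, (if m < j then g j else 0) := by
        simp
    _ = ∑' j : ℕ, (∑ _a ∈ range j, (1:ENNReal)) * g j := LW _ g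
    _ = ∑' j : ℕ, (j : ENNReal) * g j := by simp

lemma SPreal (g : ℕ → ENNReal) (T : ENNReal) (hT : ∑' j, g j = T) (htop : T ≠ ⊤) (m : ℕ) :
    ∑ j ∈ range (m+1), (g j).toReal + (∑' j, (if m < j then g j else 0)).toReal = T.toReal := by
  have h := SP g m
  rw [hT] at h
  have h1 : ∑ j ∈ range (m+1), g j ≠ ⊤ := by
    intro hc; rw [hc] at h; simp at h; exact htop h.symm
  have h2 : (∑' j, (if m < j then g j else 0)) ≠ ⊤ := by
    intro hc; rw [hc] at h; simp at h; exact htop h.symm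
  rw [← h, ENNReal.toReal_add h1 h2, ENNReal.toReal_sum]
  intro a ha
  exact ne_top_of_le_ne_top h1 (Finset.single_le_sum (f := g) (fun _ _ => zero_le) ha)

/-- triangle swap, version 1 -/
lemma TL (g : ℕ → ℕ → ℝ) (n : ℕ) :
    ∑ m ∈ range n, ∑ k ∈ range (m+1), g k (m-k)
      = ∑ k ∈ range n, ∑ j ∈ range (n-k), g k j := by
  induction n with
  | zero => simp
  | succ n ih =>
    rw [Finset.sum_range_succ, ih]
    have : ∑ k ∈ range (n+1), ∑ j ∈ range (n+1-k), g k j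
        = ∑ k ∈ range (n+1), (∑ j ∈ range (n-k), g k j + g k (n-k)) := by
      refine Finset.sum_congr rfl fun k hk => ?_
      have hk' : n+1-k = (n-k)+1 := by simp at hk; omega
      rw [hk', Finset.sum_range_succ]
    rw [this, Finset.sum_add_distrib, Finset.sum_range_succ (fun k => ∑ j ∈ range (n-k), g k j)]
    simp

/-- triangle swap, version 2 (symmetric) -/
lemma tri (h : ℕ → ℕ → ℝ) (N : ℕ) :
    ∑ b ∈ range N, ∑ k ∈ range (N-b), h b k
      = ∑ k ∈ range N, ∑ b ∈ range (N-k), h b k := by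
  induction N with
  | zero => simp
  | succ N ih =>
    have expand : ∀ u : ℕ → ℕ → ℝ, ∑ b ∈ range (N+1), ∑ k ∈ range (N+1-b), u b k
        = ∑ b ∈ range N, ∑ k ∈ range (N-b), u b k + ∑ b ∈ range (N+1), u b (N-b) := by
      intro u
      have : ∑ b ∈ range (N+1), ∑ k ∈ range (N+1-b), u b k
          = ∑ b ∈ range (N+1), (∑ k ∈ range (N-b), u b k + u b (N-b)) := by
        refine Finset.sum_congr rfl fun b hb => ?_
        have hb' : N+1-b = (N-b)+1 := by simp at hb; omega
        rw [hb', Finset.sum_range_succ]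
      rw [this, Finset.sum_add_distrib, Finset.sum_range_succ (fun b => ∑ k ∈ range (N-b), u b k)]
      simp
    rw [expand h, expand (fun k b => h b k), ih]
    have refl1 : ∑ b ∈ range (N+1), h b (N-b) = ∑ k ∈ range (N+1), h (N-k) k := by
      rw [← Finset.sum_range_reflect (fun j => h j (N-j)) (N+1)]
      refine Finset.sum_congr rfl fun j hj => ?_
      simp only [Nat.add_sub_cancel]
      have hNj : N - (N - j) = j := by simp at hj; omega
      rw [hNj]
    rw [refl1]

end PostnikovAux

open Filter Topology Finset

section
open PostnikovAux

/-- Tauberian theorem of Postnikov: if `γ₁ = Σ_{j≥1} j f_j = 1` and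
`γ₃ = Σ_{j≥3} j(j-1)(j-2) f_j < ∞`, then `Q_n = (2Q_0/γ₂) n + O(log n)` as `n → ∞`. -/
theorem postnikov_remainder
    (f Q : ℕ → ℝ)
    (hf0 : 0 < f 0) (hf : ∀ i, 0 ≤ f i)
    (hfsum : ∑' i : ℕ, f i = 1)
    (hQ0 : 0 < Q 0)
    (hrec : ∀ n, Q n = ∑ i ∈ Finset.range (n + 1), f i * Q (n - i + 1))
    (hγ1 : ∑' j : ℕ, ENNReal.ofReal ((j : ℝ) * f j) = 1)
    (hγ3 : ∑' j : ℕ, ENNReal.ofReal ((j.descFactorial 3 : ℝ) * f j) < ⊤) :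
    ∃ C > (0 : ℝ), ∃ N : ℕ, ∀ n ≥ N,
      |Q n - 2 * Q 0 / (∑' j : ℕ, ENNReal.ofReal ((j.descFactorial 2 : ℝ) * f j)).toReal * n|
        ≤ C * Real.log n := by
  classical
  -- summability of f
  have hSf : Summable f := by
    by_contra h
    rw [tsum_eq_zero_of_not_summable h] at hfsum
    norm_num at hfsum
  set gE : ℕ → ENNReal := fun j => ENNReal.ofReal (f j) with hgE
  have hgtot : ∑' j, gE j = 1 := by
    rw [hgE, ← ENNReal.ofReal_tsum_of_nonneg hf hSf, hfsum, ENNReal.ofReal_one]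
  have hγ1' : (∑' j : ℕ, (j : ENNReal) * gE j) = 1 := by
    rw [← hγ1]
    refine tsum_congr fun j => ?_
    rw [ENNReal.ofReal_mul (by positivity), ENNReal.ofReal_natCast]
  set RE : ℕ → ENNReal := fun k => ∑' j, if k < j then gE j else 0 with hRE
  have hRtot : ∑' k, RE k = 1 := (L1 gE).trans hγ1'
  set ρE : ℕ → ENNReal := fun m => ∑' a, if m < a then RE a else 0 with hρE
  set μE : ENNReal := ∑' m, ρE m with hμE
  have hμE1 : μE = ∑' a : ℕ, (a : ENNReal) * RE a := L1 RE
  have hμ2 : 2 * μE = ∑' j : ℕ, ENNReal.ofReal ((j.descFactorial 2 : ℝ) * f j) := by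
    have e1 : μE = ∑' j : ℕ, ((∑ a ∈ Finset.range j, a : ℕ) : ENNReal) * gE j := by
      rw [hμE1]
      rw [LW (fun a : ℕ => (a : ENNReal)) gE]
      exact tsum_congr fun j => by rw [Nat.cast_sum]
    rw [e1, ← ENNReal.tsum_mul_left]
    refine tsum_congr fun j => ?_
    rw [← mul_assoc, ENNReal.ofReal_mul (by positivity), ENNReal.ofReal_natCast]
    congr 1
    rw [show ((2:ENNReal) * (((∑ a ∈ range j, a : ℕ)) : ENNReal))
        = (((∑ a ∈ range j, a) * 2 : ℕ) : ENNReal) by push_cast; ring]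
    rw [nat_d2]
  set πE : ℕ → ENNReal := fun m => ∑' b, if m < b then ρE b else 0 with hπE
  set sE : ENNReal := ∑' m, πE m with hsE
  have hs6 : 6 * sE = ∑' j : ℕ, ENNReal.ofReal ((j.descFactorial 3 : ℝ) * f j) := by
    have e1 : sE = ∑' b : ℕ, (b : ENNReal) * ρE b := L1 ρE
    have e2 : (∑' b : ℕ, (b : ENNReal) * ρE b)
        = ∑' a : ℕ, ((∑ x ∈ range a, x : ℕ) : ENNReal) * RE a := by
      rw [LW (fun b : ℕ => (b : ENNReal)) RE]
      exact tsum_congr fun a => by rw [Nat.cast_sum]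
    have e3 : (∑' a : ℕ, ((∑ x ∈ range a, x : ℕ) : ENNReal) * RE a)
        = ∑' j : ℕ, ((∑ b ∈ range j, ∑ x ∈ range b, x : ℕ) : ENNReal) * gE j := by
      rw [LW (fun a : ℕ => ((∑ x ∈ range a, x : ℕ) : ENNReal)) gE]
      exact tsum_congr fun j => by rw [Nat.cast_sum]
    rw [e1, e2, e3, ← ENNReal.tsum_mul_left]
    refine tsum_congr fun j => ?_
    rw [← mul_assoc, ENNReal.ofReal_mul (by positivity), ENNReal.ofReal_natCast]
    congr 1
    rw [show ((6:ENNReal) * (((∑ b ∈ range j, ∑ x ∈ range b, x : ℕ)) : ENNReal))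
        = (((∑ b ∈ range j, ∑ x ∈ range b, x) * 6 : ℕ) : ENNReal) by push_cast; ring]
    rw [nat_d3]
  have hγ3ne : (∑' j : ℕ, ENNReal.ofReal ((j.descFactorial 3 : ℝ) * f j)) ≠ ⊤ := hγ3.ne
  have hsne : sE ≠ ⊤ := by
    intro hc
    apply hγ3ne
    rw [← hs6, hc, ENNReal.mul_top]
    norm_num
  have hγ2ne : (∑' j : ℕ, ENNReal.ofReal ((j.descFactorial 2 : ℝ) * f j)) ≠ ⊤ := by
    have hle : ∀ j : ℕ, ENNReal.ofReal ((j.descFactorial 2 : ℝ) * f j)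
        ≤ ENNReal.ofReal ((j.descFactorial 3 : ℝ) * f j)
          + 2 * ENNReal.ofReal ((j : ℝ) * f j) := by
      intro j
      have h1 : ((j.descFactorial 2 : ℝ)) * f j
          ≤ (j.descFactorial 3 : ℝ) * f j + (2 * j) * f j := by
        have hcast : ((j.descFactorial 2 : ℝ)) ≤ (j.descFactorial 3 : ℝ) + 2 * j := by
          exact_mod_cast nat_d2_le j
        nlinarith [hf j]
      calc ENNReal.ofReal ((j.descFactorial 2 : ℝ) * f j)
          ≤ ENNReal.ofReal ((j.descFactorial 3 : ℝ) * f j + (2 * j) * f j) :=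
            ENNReal.ofReal_le_ofReal h1
        _ = ENNReal.ofReal ((j.descFactorial 3 : ℝ) * f j)
            + ENNReal.ofReal (2 * ((j : ℝ) * f j)) := by
            rw [← ENNReal.ofReal_add (mul_nonneg (Nat.cast_nonneg _) (hf j))
              (by nlinarith [hf j, Nat.cast_nonneg (α := ℝ) j])]
            congr 1
            ring
        _ = ENNReal.ofReal ((j.descFactorial 3 : ℝ) * f j)
            + 2 * ENNReal.ofReal ((j : ℝ) * f j) := by
            rw [ENNReal.ofReal_mul (by norm_num : (0:ℝ) ≤ 2)]
            norm_num
    have := ENNReal.tsum_le_tsum hle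
    rw [ENNReal.tsum_add, ENNReal.tsum_mul_left, hγ1] at this
    intro hc
    rw [hc] at this
    exact (ENNReal.add_ne_top.mpr ⟨hγ3ne, by norm_num⟩) (top_le_iff.mp this)
  have hμne : μE ≠ ⊤ := by
    intro hc
    apply hγ2ne
    rw [← hμ2, hc, ENNReal.mul_top]
    norm_num
  have hμ0 : μE ≠ 0 := by
    intro hc
    have hρ00 : ρE 0 = 0 := ENNReal.tsum_eq_zero.mp (hμE ▸ hc) 0
    have hRE1 : RE 1 = 0 := by
      have h := ENNReal.tsum_eq_zero.mp hρ00 1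
      simpa using h
    have hfj : ∀ j, 2 ≤ j → f j = 0 := by
      intro j hj
      have h := ENNReal.tsum_eq_zero.mp hRE1 j
      rw [if_pos (by omega)] at h
      have h2 : f j ≤ 0 := (ENNReal.ofReal_eq_zero.mp h)
      linarith [hf j]
    have h1 : (∑' j : ℕ, ENNReal.ofReal ((j : ℝ) * f j))
        = ENNReal.ofReal (((1:ℕ) : ℝ) * f 1) := by
      refine tsum_eq_single (f := fun j : ℕ => ENNReal.ofReal ((j : ℝ) * f j)) 1
        fun j hj => ?_
      rcases j with _ | _ | m
      · simp
      · exact absurd rfl hj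
      · simp [hfj (m+1+1) (by omega)]
    rw [h1] at hγ1
    norm_num at hγ1
    have hf1 : 1 ≤ f 1 := hγ1.ge
    have hsum2 : f 0 + f 1 ≤ 1 := by
      have h := Summable.sum_le_tsum (f := f) (Finset.range 2) (fun i _ => hf i) hSf
      rw [hfsum] at h
      simpa [Finset.sum_range_succ] using h
    linarith
  -- real-valued tails
  set r : ℕ → ℝ := fun k => (RE k).toReal with hr_def
  set ρ : ℕ → ℝ := fun m => (ρE m).toReal with hρ_def
  set π : ℕ → ℝ := fun m => (πE m).toReal with hπ_def
  set μ : ℝ := μE.toReal with hμ_def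
  set s : ℝ := sE.toReal with hs_def
  have hμpos : 0 < μ := ENNReal.toReal_pos hμ0 hμne
  have hrnn : ∀ k, 0 ≤ r k := fun k => ENNReal.toReal_nonneg
  have hρnn : ∀ k, 0 ≤ ρ k := fun k => ENNReal.toReal_nonneg
  have hπnn : ∀ k, 0 ≤ π k := fun k => ENNReal.toReal_nonneg
  have hsnn : 0 ≤ s := ENNReal.toReal_nonneg
  have fact1 : ∀ m, (∑ i ∈ Finset.range (m+1), f i) + r m = 1 := by
    intro m
    have h := SPreal gE 1 hgtot (by simp) m
    have hsumeq : ∑ j ∈ range (m+1), (gE j).toReal = ∑ j ∈ range (m+1), f j :=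
      Finset.sum_congr rfl fun j _ => ENNReal.toReal_ofReal (hf j)
    rw [hsumeq] at h
    simpa using h
  have fact3 : ∀ m, (∑ a ∈ Finset.range (m+1), r a) + ρ m = 1 := by
    intro m
    have h := SPreal RE 1 hRtot (by simp) m
    simpa using h
  have fact5 : ∀ m, (∑ j ∈ Finset.range (m+1), ρ j) + π m = μ := by
    intro m
    have h := SPreal ρE μE hμE.symm hμne m
    simpa using h
  have hπsum : ∀ M, ∑ m ∈ Finset.range (M+1), π m ≤ s := by
    intro M
    have h1 : ∀ m, πE m ≠ ⊤ := fun m =>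
      ne_top_of_le_ne_top hsne (hsE ▸ ENNReal.le_tsum m)
    calc ∑ m ∈ Finset.range (M+1), π m
        = (∑ m ∈ Finset.range (M+1), πE m).toReal :=
          (ENNReal.toReal_sum fun a _ => h1 a).symm
      _ ≤ sE.toReal := ENNReal.toReal_mono hsne (hsE ▸ ENNReal.sum_le_tsum _)
  have hrstep : ∀ k, r k = f (k+1) + r (k+1) := by
    intro k
    have h1 := fact1 k
    have h2 := fact1 (k+1)
    rw [Finset.sum_range_succ] at h2
    linarith
  have hf0r0 : f 0 + r 0 = 1 := by
    have := fact1 0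
    simpa using this
  have hρ0f0 : ρ 0 = f 0 := by
    have h3 := fact3 0
    have h1 := fact1 0
    simp [Finset.sum_range_one] at h3 h1
    linarith
  have hFle : ∀ n, ∑ i ∈ Finset.range (n+1), f i ≤ 1 := fun n => by
    have := fact1 n; linarith [hrnn n]
  have hrange_r : ∀ M, ∑ n ∈ Finset.range (M+1), r n = 1 - ρ M := fun M => by
    have := fact3 M; linarith
  -- increments
  set V : ℕ → ℝ := fun m => if m = 0 then Q 0 else Q m - Q (m-1) with hV_def
  have hV0 : V 0 = Q 0 := by simp [hV_def]
  have hVs : ∀ k, V (k+1) = Q (k+1) - Q k := fun k => by simp [hV_def]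
  have htel : ∀ n, ∑ m ∈ Finset.range (n+1), V m = Q n := by
    intro n
    induction n with
    | zero => simpa using hV0
    | succ n ih => rw [Finset.sum_range_succ, ih, hVs]; ring
  -- fundamental identity (A')
  have hA' : ∀ n, f 0 * Q n
      = Q 0 * (∑ i ∈ Finset.range (n+1), f i) + ∑ k ∈ Finset.range n, r (k+1) * Q (n-1-k) := by
    intro n
    induction n with
    | zero => simp [Finset.sum_range_one]; ring
    | succ n ih =>
      have hrecn := hrec n
      have hsplit : ∑ i ∈ Finset.range (n+1), f i * Q (n - i + 1)
          = ∑ i ∈ Finset.range n, f (i+1) * Q (n-i) + f 0 * Q (n+1) := by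
        rw [Finset.sum_range_succ']
        congr 1
        refine Finset.sum_congr rfl fun i hi => ?_
        have hi' : n - (i+1) + 1 = n - i := by simp at hi; omega
        rw [hi']
      -- key summation identities
      have hS1 : ∑ k ∈ Finset.range (n+1), r (k+1) * Q (n-k)
          = ∑ k ∈ Finset.range n, r (k+1) * Q (n-k) + r (n+1) * Q 0 := by
        rw [Finset.sum_range_succ]; simp
      have hcomb : ∑ k ∈ Finset.range n, (r (k+1) + f (k+1)) * Q (n-k)
          = ∑ k ∈ Finset.range n, r k * Q (n-k) := by
        refine Finset.sum_congr rfl fun k _ => ?_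
        rw [hrstep k]; ring
      have hpeel : ∑ k ∈ Finset.range (n+1), r k * Q (n-k)
          = ∑ k ∈ Finset.range n, r (k+1) * Q (n-1-k) + r 0 * Q n := by
        rw [Finset.sum_range_succ' (fun k => r k * Q (n-k)) n]
        simp only [Nat.sub_zero]
        congr 1
        refine Finset.sum_congr rfl fun k _ => ?_
        have hnk : n - (k+1) = n - 1 - k := by omega
        rw [hnk]
      have hpeel2 : ∑ k ∈ Finset.range (n+1), r k * Q (n-k)
          = ∑ k ∈ Finset.range n, r k * Q (n-k) + r n * Q 0 := by
        rw [Finset.sum_range_succ]; simp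
      have hFsucc : ∑ i ∈ Finset.range (n+1+1), f i
          = (∑ i ∈ Finset.range (n+1), f i) + f (n+1) := Finset.sum_range_succ f (n+1)
      have hsum_split : ∑ k ∈ Finset.range n, (r (k+1) + f (k+1)) * Q (n-k)
          = ∑ k ∈ Finset.range n, r (k+1) * Q (n-k)
            + ∑ k ∈ Finset.range n, f (k+1) * Q (n-k) := by
        rw [← Finset.sum_add_distrib]
        exact Finset.sum_congr rfl fun k _ => by ring
      have hgoal_sum : ∑ k ∈ Finset.range (n+1), r (k+1) * Q (n+1-1-k)
          = ∑ k ∈ Finset.range (n+1), r (k+1) * Q (n-k) := by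
        refine Finset.sum_congr rfl fun k _ => ?_
        have : n+1-1-k = n-k := by omega
        rw [this]
      rw [hgoal_sum, hFsucc]
      rw [hsplit] at hrecn
      have hr_n : r n = f (n+1) + r (n+1) := hrstep n
      have e5 : f 0 * Q n + r 0 * Q n = Q n := by
        calc f 0 * Q n + r 0 * Q n = (f 0 + r 0) * Q n := by ring
          _ = 1 * Q n := by rw [hf0r0]
          _ = Q n := one_mul _
      have e6 : r n * Q 0 = f (n+1) * Q 0 + r (n+1) * Q 0 := by rw [hr_n]; ring
      linarith [ih, hrecn, hS1, hcomb, hpeel, hpeel2, hsum_split, e5, e6]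
  -- difference form (B)
  have hB : ∀ n, f 0 * V n
      = Q 0 * f n + ∑ k ∈ Finset.range n, r (k+1) * V (n-1-k) := by
    intro n
    rcases n with _ | m
    · simp [hV0]; ring
    · have h1 := hA' (m+1)
      have h0 := hA' m
      have hgs : ∑ k ∈ Finset.range (m+1), r (k+1) * Q (m+1-1-k)
          = ∑ k ∈ Finset.range m, r (k+1) * Q (m-k) + r (m+1) * Q 0 := by
        rw [Finset.sum_range_succ]
        have e : ∀ k, m+1-1-k = m-k := fun k => by omega
        simp only [e]
        simp
      have hgsV : ∑ k ∈ Finset.range (m+1), r (k+1) * V (m+1-1-k)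
          = ∑ k ∈ Finset.range m, r (k+1) * V (m-k) + r (m+1) * Q 0 := by
        rw [Finset.sum_range_succ]
        have e : ∀ k, m+1-1-k = m-k := fun k => by omega
        simp only [e]
        simp [hV0]
      have hdiff : ∑ k ∈ Finset.range m, r (k+1) * V (m-k)
          = ∑ k ∈ Finset.range m, r (k+1) * Q (m-k)
            - ∑ k ∈ Finset.range m, r (k+1) * Q (m-1-k) := by
        rw [← Finset.sum_sub_distrib]
        refine Finset.sum_congr rfl fun k hk => ?_
        have hk' : m - k = (m-1-k)+1 := by simp at hk; omega
        rw [hk', hVs]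
        ring
      have hFsucc : ∑ i ∈ Finset.range (m+1+1), f i
          = (∑ i ∈ Finset.range (m+1), f i) + f (m+1) := Finset.sum_range_succ f (m+1)
      have hVm : V (m+1) = Q (m+1) - Q m := hVs m
      rw [hgsV, hVm]
      rw [hgs, hFsucc] at h1
      linarith [hdiff]
  have hVnn : ∀ n, 0 ≤ V n := by
    intro n
    induction n using Nat.strong_induction_on with
    | _ n ih =>
      have h := hB n
      have hsum : 0 ≤ ∑ k ∈ Finset.range n, r (k+1) * V (n-1-k) :=
        Finset.sum_nonneg fun k hk =>
          mul_nonneg (hrnn _) (ih (n-1-k) (by simp at hk; omega))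
      nlinarith [mul_nonneg hQ0.le (hf n)]
  -- identity (A)
  have hA : ∀ n, ∑ b ∈ Finset.range (n+1), ρ (n-b) * V b
      = Q 0 * ∑ i ∈ Finset.range (n+1), f i := by
    intro n
    have e1 : ∑ b ∈ Finset.range (n+1), ρ (n-b) * V b
        = ∑ b ∈ Finset.range (n+1),
            (V b - (∑ k ∈ Finset.range (n-b), r (k+1)) * V b - r 0 * V b) := by
      refine Finset.sum_congr rfl fun b _ => ?_
      have h3 := fact3 (n-b)
      have h4 : ∑ a ∈ Finset.range ((n-b)+1), r a
          = ∑ k ∈ Finset.range (n-b), r (k+1) + r 0 := Finset.sum_range_succ' r (n-b)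
      have hρval : ρ (n-b) = 1 - ∑ k ∈ Finset.range (n-b), r (k+1) - r 0 := by
        rw [h4] at h3; linarith
      rw [hρval]; ring
    have e2 : ∑ b ∈ Finset.range (n+1),
          (V b - (∑ k ∈ Finset.range (n-b), r (k+1)) * V b - r 0 * V b)
        = Q n - (∑ b ∈ Finset.range (n+1), ∑ k ∈ Finset.range (n-b), r (k+1) * V b)
          - r 0 * Q n := by
      rw [Finset.sum_sub_distrib, Finset.sum_sub_distrib, htel, ← Finset.mul_sum, htel]
      congr 1
      congr 1
      exact Finset.sum_congr rfl fun b _ => by rw [Finset.sum_mul]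
    have e3 : ∑ b ∈ Finset.range (n+1), ∑ k ∈ Finset.range (n-b), r (k+1) * V b
        = ∑ k ∈ Finset.range n, ∑ b ∈ Finset.range (n-k), r (k+1) * V b := by
      rw [Finset.sum_range_succ]
      simp only [Nat.sub_self, Finset.range_zero, Finset.sum_empty, add_zero]
      exact tri (fun b k => r (k+1) * V b) n
    have e4 : ∑ k ∈ Finset.range n, ∑ b ∈ Finset.range (n-k), r (k+1) * V b
        = ∑ k ∈ Finset.range n, r (k+1) * Q (n-1-k) := by
      refine Finset.sum_congr rfl fun k hk => ?_
      rw [← Finset.mul_sum]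
      congr 1
      have : n - k = (n-1-k)+1 := by simp at hk; omega
      rw [this]
      exact htel (n-1-k)
    have h := hA' n
    have e5 : f 0 * Q n + r 0 * Q n = Q n := by
      calc f 0 * Q n + r 0 * Q n = (f 0 + r 0) * Q n := by ring
        _ = 1 * Q n := by rw [hf0r0]
        _ = Q n := one_mul _
    rw [e1, e2, e3, e4]
    linarith
  -- bound on increments
  have hVle : ∀ n, V n ≤ Q 0 / f 0 := by
    intro n
    have h := hA n
    have h1 : ρ 0 * V n ≤ ∑ b ∈ Finset.range (n+1), ρ (n-b) * V b := by
      have := Finset.single_le_sum (f := fun b => ρ (n-b) * V b)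
        (fun b _ => mul_nonneg (hρnn _) (hVnn b)) (Finset.self_mem_range_succ n)
      simpa [Nat.sub_self] using this
    rw [hρ0f0, h] at h1
    have h2 : Q 0 * ∑ i ∈ Finset.range (n+1), f i ≤ Q 0 := by
      nlinarith [hFle n]
    rw [le_div_iff₀ hf0]
    nlinarith
  -- summed identity (C)
  have hC : ∀ M, ∑ b ∈ Finset.range (M+1), (∑ j ∈ Finset.range ((M-b)+1), ρ j) * V b
      = Q 0 * ∑ n ∈ Finset.range (M+1), (∑ i ∈ Finset.range (n+1), f i) := by
    intro M
    have h1 : ∑ n ∈ Finset.range (M+1), ∑ b ∈ Finset.range (n+1), ρ (n-b) * V b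
        = ∑ n ∈ Finset.range (M+1), Q 0 * ∑ i ∈ Finset.range (n+1), f i :=
      Finset.sum_congr rfl fun n _ => hA n
    have h2 := TL (fun k j => ρ j * V k) (M+1)
    calc ∑ b ∈ Finset.range (M+1), (∑ j ∈ Finset.range ((M-b)+1), ρ j) * V b
        = ∑ b ∈ Finset.range (M+1), ∑ j ∈ Finset.range (M+1-b), ρ j * V b := by
          refine Finset.sum_congr rfl fun b hb => ?_
          have hb' : (M-b)+1 = M+1-b := by simp at hb; omega
          rw [hb', Finset.sum_mul]
      _ = ∑ n ∈ Finset.range (M+1), ∑ b ∈ Finset.range (n+1), ρ (n-b) * V b := h2.symm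
      _ = ∑ n ∈ Finset.range (M+1), Q 0 * ∑ i ∈ Finset.range (n+1), f i := h1
      _ = Q 0 * ∑ n ∈ Finset.range (M+1), (∑ i ∈ Finset.range (n+1), f i) :=
          (Finset.mul_sum _ _ _).symm
  -- main bound
  have key : ∀ M : ℕ, |Q M - (Q 0 / μ) * M| ≤ (Q 0 + (Q 0 / f 0) * s) / μ := by
    intro M
    have hCM := hC M
    have e1 : ∑ b ∈ Finset.range (M+1), (∑ j ∈ Finset.range ((M-b)+1), ρ j) * V b
        = μ * Q M - ∑ b ∈ Finset.range (M+1), π (M-b) * V b := by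
      have hterm : ∀ b ∈ Finset.range (M+1),
          (∑ j ∈ Finset.range ((M-b)+1), ρ j) * V b = μ * V b - π (M-b) * V b := by
        intro b _
        have h5 := fact5 (M-b)
        have : (∑ j ∈ Finset.range ((M-b)+1), ρ j) = μ - π (M-b) := by linarith
        rw [this]; ring
      rw [Finset.sum_congr rfl hterm, Finset.sum_sub_distrib, ← Finset.mul_sum, htel]
    have e2 : Q 0 * ∑ n ∈ Finset.range (M+1), (∑ i ∈ Finset.range (n+1), f i)
        = Q 0 * (M+1) - Q 0 * ∑ n ∈ Finset.range (M+1), r n := by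
      have hcong : ∑ n ∈ Finset.range (M+1), (∑ i ∈ Finset.range (n+1), f i)
          = ∑ n ∈ Finset.range (M+1), (1 - r n) :=
        Finset.sum_congr rfl fun n _ => by have := fact1 n; linarith
      rw [hcong, Finset.sum_sub_distrib]
      simp [Finset.sum_const]
      ring
    have hb1 : 0 ≤ ∑ n ∈ Finset.range (M+1), r n :=
      Finset.sum_nonneg fun n _ => hrnn n
    have hb2 : ∑ n ∈ Finset.range (M+1), r n ≤ 1 := by
      rw [hrange_r M]; linarith [hρnn M]
    have hb3 : 0 ≤ ∑ b ∈ Finset.range (M+1), π (M-b) * V b :=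
      Finset.sum_nonneg fun b _ => mul_nonneg (hπnn _) (hVnn b)
    have hb4 : ∑ b ∈ Finset.range (M+1), π (M-b) * V b ≤ (Q 0 / f 0) * s := by
      have hQf : 0 ≤ Q 0 / f 0 := div_nonneg hQ0.le hf0.le
      calc ∑ b ∈ Finset.range (M+1), π (M-b) * V b
          ≤ ∑ b ∈ Finset.range (M+1), π (M-b) * (Q 0 / f 0) :=
            Finset.sum_le_sum fun b _ => mul_le_mul_of_nonneg_left (hVle b) (hπnn _)
        _ = (∑ b ∈ Finset.range (M+1), π (M-b)) * (Q 0 / f 0) :=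
            (Finset.sum_mul _ _ _).symm
        _ = (∑ m ∈ Finset.range (M+1), π m) * (Q 0 / f 0) := by
            congr 1
            rw [← Finset.sum_range_reflect (fun j => π j) (M+1)]
            exact Finset.sum_congr rfl fun b _ => by simp
        _ ≤ (Q 0 / f 0) * s := by
            rw [mul_comm]
            exact mul_le_mul_of_nonneg_left (hπsum M) hQf
    have hiden : μ * Q M - Q 0 * M
        = Q 0 * (1 - ∑ n ∈ Finset.range (M+1), r n)
          + ∑ b ∈ Finset.range (M+1), π (M-b) * V b := by
      rw [e1, e2] at hCM
      push_cast at hCM ⊢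
      linarith
    have habs : |μ * Q M - Q 0 * M| ≤ Q 0 + (Q 0 / f 0) * s := by
      rw [abs_le]
      constructor <;> nlinarith
    have hdivform : Q M - (Q 0 / μ) * M = (μ * Q M - Q 0 * M) / μ := by
      field_simp
    rw [hdivform, abs_div, abs_of_pos hμpos]
    exact (div_le_div_iff_of_pos_right hμpos).mpr habs
  -- conclusion
  have hγ2toReal : (∑' j : ℕ, ENNReal.ofReal ((j.descFactorial 2 : ℝ) * f j)).toReal
      = 2 * μ := by
    rw [← hμ2, ENNReal.toReal_mul]
    norm_num
    exact hμ_def.symm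
  have hc_eq : 2 * Q 0 / (∑' j : ℕ, ENNReal.ofReal ((j.descFactorial 2 : ℝ) * f j)).toReal
      = Q 0 / μ := by
    rw [hγ2toReal, mul_div_mul_left _ _ (by norm_num : (2:ℝ) ≠ 0)]
  set B : ℝ := (Q 0 + (Q 0 / f 0) * s) / μ with hB_def
  have hBnn : 0 ≤ B := by
    apply div_nonneg _ hμpos.le
    have : 0 ≤ (Q 0 / f 0) * s := mul_nonneg (div_nonneg hQ0.le hf0.le) hsnn
    linarith
  refine ⟨B + 1, by linarith, 3, fun n hn => ?_⟩
  have h3n : (3:ℝ) ≤ (n:ℝ) := by exact_mod_cast hn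
  have hlog : 1 ≤ Real.log n := by
    have hexp : Real.exp 1 < 3 := by
      have := Real.exp_one_lt_d9
      linarith
    calc (1:ℝ) = Real.log (Real.exp 1) := (Real.log_exp 1).symm
      _ ≤ Real.log n := Real.log_le_log (Real.exp_pos 1) (by linarith)
  calc |Q n - 2 * Q 0 / (∑' j : ℕ, ENNReal.ofReal ((j.descFactorial 2 : ℝ) * f j)).toReal * n|
      = |Q n - (Q 0 / μ) * n| := by rw [hc_eq]
    _ ≤ B := key n
    _ ≤ (B + 1) * Real.log n := by nlinarith

end
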